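/- Suppose P_{i+1} = Q₁ + K₁ᵀR₁₁K₁ + K₂ᵀR₁₂K₂ + γ(A + B₁K₁ + B₂K₂)ᵀP_i(A + B₁K₁ + B₂K₂), where K₁ = −(R₁₁ + γB₁ᵀP_iB₁ − γ²B₁ᵀP_iB₂(R₁₂ + γB₂ᵀP_iB₂)⁻¹B₂ᵀP_iB₁)⁻¹ γB₁ᵀP_i(I − γB₂(R₁₂ + γB₂ᵀP_iB₂)⁻¹B₂ᵀP_i)A and K₂ analogously with indices 1 and 2 swapped. Then P_{i+1} = Q₁ + γAᵀP_iA − γ²[AᵀP_iB₁ AᵀP_iB₂] · ([R₁₁ + γB₁ᵀP_iB₁, γB₁ᵀP_iB₂; γB₂ᵀP_iB₁, R₁₂ + γB₂ᵀP_iB₂])⁻¹ · [B₁ᵀP_iA; B₂ᵀP_iA], i.e., the minimizing gains over both players jointly satisfy the block Riccati recursion. -/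

import Mathlib

open Matrix

lemma smul_psd {m : ℕ} {γ : ℝ} (hγ : 0 ≤ γ) {M : Matrix (Fin m) (Fin m) ℝ}
    (hM : M.PosSemidef) : (γ • M).PosSemidef := by
  have hT : Mᵀ = M := by
    have := hM.1.eq
    rwa [conjTranspose_eq_transpose_of_trivial] at this
  constructor
  · unfold Matrix.IsHermitian
    rw [conjTranspose_smul]
    simp [hT]
  · intro x
    exact (hM.smul hγ).2 x

lemma aux {m1 m2 : ℕ}
    (D1 : Matrix (Fin m1) (Fin m1) ℝ) (D2 : Matrix (Fin m2) (Fin m2) ℝ)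
    (C : Matrix (Fin m1) (Fin m2) ℝ) (E : Matrix (Fin m2) (Fin m1) ℝ)
    (hD1 : IsUnit D1.det) (hD2 : IsUnit D2.det)
    (hS1 : IsUnit (D1 - C * D2⁻¹ * E).det) (hS2 : IsUnit (D2 - E * D1⁻¹ * C).det) :
    (D2 - E * D1⁻¹ * C)⁻¹ * (E * D1⁻¹) = D2⁻¹ * (E * (D1 - C * D2⁻¹ * E)⁻¹) := by
  set S1 := D1 - C * D2⁻¹ * E with hS1def
  set S2 := D2 - E * D1⁻¹ * C with hS2def
  have base : E * (D1⁻¹ * S1) = S2 * (D2⁻¹ * E) := by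
    simp only [hS1def, hS2def, Matrix.mul_sub, Matrix.sub_mul, Matrix.mul_assoc,
      Matrix.nonsing_inv_mul _ hD1, Matrix.mul_one,
      Matrix.mul_nonsing_inv_cancel_left _ _ hD2]
  calc S2⁻¹ * (E * D1⁻¹)
      = S2⁻¹ * (E * (D1⁻¹ * (S1 * S1⁻¹))) := by
        rw [Matrix.mul_nonsing_inv _ hS1, Matrix.mul_one]
    _ = S2⁻¹ * (E * (D1⁻¹ * S1) * S1⁻¹) := by simp only [Matrix.mul_assoc]
    _ = S2⁻¹ * (S2 * (D2⁻¹ * E) * S1⁻¹) := by rw [base]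
    _ = D2⁻¹ * (E * S1⁻¹) := by
        simp only [Matrix.mul_assoc, Matrix.nonsing_inv_mul_cancel_left _ _ hS2]

lemma key {m1 m2 n : ℕ}
    (D1 : Matrix (Fin m1) (Fin m1) ℝ) (D2 : Matrix (Fin m2) (Fin m2) ℝ)
    (C : Matrix (Fin m1) (Fin m2) ℝ) (E : Matrix (Fin m2) (Fin m1) ℝ)
    (v1 : Matrix (Fin m1) (Fin n) ℝ) (v2 : Matrix (Fin m2) (Fin n) ℝ)
    (hD1 : IsUnit D1.det) (hD2 : IsUnit D2.det)
    (hS1 : IsUnit (D1 - C * D2⁻¹ * E).det) (hS2 : IsUnit (D2 - E * D1⁻¹ * C).det) :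
    D1 * (-((D1 - C * D2⁻¹ * E)⁻¹ * (v1 - C * D2⁻¹ * v2)))
      + C * (-((D2 - E * D1⁻¹ * C)⁻¹ * (v2 - E * D1⁻¹ * v1))) = -v1 := by
  have h2 : (D2 - E * D1⁻¹ * C)⁻¹ * (E * D1⁻¹)
      = D2⁻¹ * (E * (D1 - C * D2⁻¹ * E)⁻¹) := aux D1 D2 C E hD1 hD2 hS1 hS2
  have h2' : (D1 - C * D2⁻¹ * E)⁻¹ * (C * D2⁻¹)
      = D1⁻¹ * (C * (D2 - E * D1⁻¹ * C)⁻¹) := aux D2 D1 E C hD2 hD1 hS2 hS1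
  set S1 := D1 - C * D2⁻¹ * E with hS1def
  set S2 := D2 - E * D1⁻¹ * C with hS2def
  have M1 : D1 * S1⁻¹ - C * (S2⁻¹ * (E * D1⁻¹)) = 1 := by
    rw [h2, show D1 * S1⁻¹ - C * (D2⁻¹ * (E * S1⁻¹)) = S1 * S1⁻¹ from by
      simp only [hS1def, Matrix.sub_mul, Matrix.mul_assoc]]
    exact Matrix.mul_nonsing_inv _ hS1
  have M2 : D1 * (S1⁻¹ * (C * D2⁻¹)) = C * S2⁻¹ := by
    rw [h2', Matrix.mul_nonsing_inv_cancel_left _ _ hD1]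
  have expand : D1 * (S1⁻¹ * (v1 - C * (D2⁻¹ * v2))) + C * (S2⁻¹ * (v2 - E * (D1⁻¹ * v1)))
      = (D1 * S1⁻¹ - C * (S2⁻¹ * (E * D1⁻¹))) * v1
        + (C * S2⁻¹ - D1 * (S1⁻¹ * (C * D2⁻¹))) * v2 := by
    simp only [Matrix.mul_sub, Matrix.sub_mul, Matrix.mul_assoc]
    abel
  rw [Matrix.mul_neg, Matrix.mul_neg, ← neg_add, neg_inj]
  simp only [Matrix.mul_assoc]
  rw [expand, M1, M2, Matrix.one_mul, sub_self, Matrix.zero_mul, add_zero]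

theorem stmt_9 {n m1 m2 : ℕ}
    (A Q₁ Pi : Matrix (Fin n) (Fin n) ℝ) (B₁ : Matrix (Fin n) (Fin m1) ℝ)
    (B₂ : Matrix (Fin n) (Fin m2) ℝ)
    (R₁₁ : Matrix (Fin m1) (Fin m1) ℝ) (R₁₂ : Matrix (Fin m2) (Fin m2) ℝ)
    (γ : ℝ) (hγ : 0 < γ) (hγ1 : γ < 1)
    (hQ : Q₁.PosSemidef) (hPi : Pi.PosSemidef) (hR11 : R₁₁.PosDef) (hR12 : R₁₂.PosDef)
    (G : Matrix (Fin m1 ⊕ Fin m2) (Fin m1 ⊕ Fin m2) ℝ)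
    (hG : G = fromBlocks (R₁₁ + γ • (B₁ᵀ * Pi * B₁)) (γ • (B₁ᵀ * Pi * B₂))
                         (γ • (B₂ᵀ * Pi * B₁)) (R₁₂ + γ • (B₂ᵀ * Pi * B₂)))
    (hGpd : G.PosDef)
    (hS1 : IsUnit (R₁₁ + γ • (B₁ᵀ * Pi * B₁)
            - (γ * γ) • (B₁ᵀ * Pi * B₂ * (R₁₂ + γ • (B₂ᵀ * Pi * B₂))⁻¹ * (B₂ᵀ * Pi * B₁))).det)
    (hS2 : IsUnit (R₁₂ + γ • (B₂ᵀ * Pi * B₂)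
            - (γ * γ) • (B₂ᵀ * Pi * B₁ * (R₁₁ + γ • (B₁ᵀ * Pi * B₁))⁻¹ * (B₁ᵀ * Pi * B₂))).det)
    (K₁ : Matrix (Fin m1) (Fin n) ℝ) (K₂ : Matrix (Fin m2) (Fin n) ℝ)
    (hK₁ : K₁ = -((R₁₁ + γ • (B₁ᵀ * Pi * B₁)
            - (γ * γ) • (B₁ᵀ * Pi * B₂ * (R₁₂ + γ • (B₂ᵀ * Pi * B₂))⁻¹ * (B₂ᵀ * Pi * B₁)))⁻¹
          * (γ • (B₁ᵀ * Pi
              * (1 - γ • (B₂ * (R₁₂ + γ • (B₂ᵀ * Pi * B₂))⁻¹ * (B₂ᵀ * Pi))) * A))))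
    (hK₂ : K₂ = -((R₁₂ + γ • (B₂ᵀ * Pi * B₂)
            - (γ * γ) • (B₂ᵀ * Pi * B₁ * (R₁₁ + γ • (B₁ᵀ * Pi * B₁))⁻¹ * (B₁ᵀ * Pi * B₂)))⁻¹
          * (γ • (B₂ᵀ * Pi
              * (1 - γ • (B₁ * (R₁₁ + γ • (B₁ᵀ * Pi * B₁))⁻¹ * (B₁ᵀ * Pi))) * A))))
    (Pnext : Matrix (Fin n) (Fin n) ℝ)
    (hPnext : Pnext = Q₁ + K₁ᵀ * R₁₁ * K₁ + K₂ᵀ * R₁₂ * K₂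
        + γ • ((A + B₁ * K₁ + B₂ * K₂)ᵀ * Pi * (A + B₁ * K₁ + B₂ * K₂))) :
    Pnext = Q₁ + γ • (Aᵀ * Pi * A)
      - (γ * γ) • (fromCols (Aᵀ * Pi * B₁) (Aᵀ * Pi * B₂) * G⁻¹
          * fromRows (B₁ᵀ * Pi * A) (B₂ᵀ * Pi * A)) := by
  set D1 := R₁₁ + γ • (B₁ᵀ * Pi * B₁) with hD1def
  set D2 := R₁₂ + γ • (B₂ᵀ * Pi * B₂) with hD2def
  set C := γ • (B₁ᵀ * Pi * B₂) with hCdef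
  set E := γ • (B₂ᵀ * Pi * B₁) with hEdef
  set v1 := γ • (B₁ᵀ * Pi * A) with hv1def
  set v2 := γ • (B₂ᵀ * Pi * A) with hv2def
  -- invertibility of diagonal blocks
  have hpsd1 : (B₁ᵀ * Pi * B₁).PosSemidef := by
    have := hPi.conjTranspose_mul_mul_same B₁
    rwa [conjTranspose_eq_transpose_of_trivial] at this
  have hpsd2 : (B₂ᵀ * Pi * B₂).PosSemidef := by
    have := hPi.conjTranspose_mul_mul_same B₂
    rwa [conjTranspose_eq_transpose_of_trivial] at this
  have hD1u : IsUnit D1.det :=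
    (hR11.add_posSemidef (smul_psd hγ.le hpsd1)).det_pos.ne'.isUnit
  have hD2u : IsUnit D2.det :=
    (hR12.add_posSemidef (smul_psd hγ.le hpsd2)).det_pos.ne'.isUnit
  have hGu : IsUnit G.det := hGpd.det_pos.ne'.isUnit
  -- rewrite Schur complements
  have hCs : C * D2⁻¹ * E = (γ * γ) • (B₁ᵀ * Pi * B₂ * D2⁻¹ * (B₂ᵀ * Pi * B₁)) := by
    simp [hCdef, hEdef, Matrix.smul_mul, Matrix.mul_smul, smul_smul, Matrix.mul_assoc]
  have hEs : E * D1⁻¹ * C = (γ * γ) • (B₂ᵀ * Pi * B₁ * D1⁻¹ * (B₁ᵀ * Pi * B₂)) := by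
    simp [hCdef, hEdef, Matrix.smul_mul, Matrix.mul_smul, smul_smul, Matrix.mul_assoc]
  have hS1u : IsUnit (D1 - C * D2⁻¹ * E).det := by rw [hCs]; exact hS1
  have hS2u : IsUnit (D2 - E * D1⁻¹ * C).det := by rw [hEs]; exact hS2
  -- rewrite the gains
  have hK₁' : K₁ = -((D1 - C * D2⁻¹ * E)⁻¹ * (v1 - C * D2⁻¹ * v2)) := by
    rw [hK₁, hCs]
    congr 1
    simp only [hCdef, hv1def, hv2def, Matrix.mul_sub, Matrix.sub_mul, Matrix.mul_one,
      smul_sub, Matrix.smul_mul, Matrix.mul_smul, smul_smul, Matrix.mul_assoc]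
  have hK₂' : K₂ = -((D2 - E * D1⁻¹ * C)⁻¹ * (v2 - E * D1⁻¹ * v1)) := by
    rw [hK₂, hEs]
    congr 1
    simp only [hEdef, hv1def, hv2def, Matrix.mul_sub, Matrix.sub_mul, Matrix.mul_one,
      smul_sub, Matrix.smul_mul, Matrix.mul_smul, smul_smul, Matrix.mul_assoc]
  -- the joint linear system
  have e1 : D1 * K₁ + C * K₂ = -v1 := by
    rw [hK₁', hK₂']; exact key D1 D2 C E v1 v2 hD1u hD2u hS1u hS2u
  have e2 : E * K₁ + D2 * K₂ = -v2 := by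
    rw [hK₁', hK₂', add_comm]; exact key D2 D1 E C v2 v1 hD2u hD1u hS2u hS1u
  have hGW : G * fromRows K₁ K₂ = fromRows (-v1) (-v2) := by
    rw [hG, fromBlocks_mul_fromRows, e1, e2]
  have hK : fromRows K₁ K₂ = G⁻¹ * fromRows (-v1) (-v2) := by
    conv_lhs => rw [← Matrix.nonsing_inv_mul_cancel_left G (fromRows K₁ K₂) hGu]
    rw [hGW]
  -- expansion of Pnext
  have hPx : Pnext = Q₁ + γ • (Aᵀ * Pi * A)
      + (K₁ᵀ * (D1 * K₁ + C * K₂) + K₂ᵀ * (E * K₁ + D2 * K₂))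
      + γ • (Aᵀ * Pi * B₁ * K₁) + γ • (Aᵀ * Pi * B₂ * K₂)
      + K₁ᵀ * v1 + K₂ᵀ * v2 := by
    rw [hPnext, hD1def, hD2def, hCdef, hEdef, hv1def, hv2def]
    simp only [transpose_add, transpose_mul, Matrix.mul_add, Matrix.add_mul, Matrix.mul_sub,
      Matrix.sub_mul, smul_add, smul_sub, Matrix.smul_mul, Matrix.mul_smul, smul_smul,
      Matrix.mul_assoc]
    abel
  rw [hPx, e1, e2]
  have hUK : Aᵀ * Pi * B₁ * K₁ + Aᵀ * Pi * B₂ * K₂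
      = fromCols (Aᵀ * Pi * B₁) (Aᵀ * Pi * B₂) * fromRows K₁ K₂ :=
    (fromCols_mul_fromRows _ _ _ _).symm
  have hfr : fromRows (-v1) (-v2)
      = -(γ • fromRows (B₁ᵀ * Pi * A) (B₂ᵀ * Pi * A)) := by
    ext i j
    rcases i with i | i <;> simp [hv1def, hv2def]
  have hrhs : γ • (Aᵀ * Pi * B₁ * K₁) + γ • (Aᵀ * Pi * B₂ * K₂)
      = -((γ * γ) • (fromCols (Aᵀ * Pi * B₁) (Aᵀ * Pi * B₂) * G⁻¹
          * fromRows (B₁ᵀ * Pi * A) (B₂ᵀ * Pi * A))) := by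
    rw [← smul_add, hUK, hK, hfr]
    simp only [Matrix.mul_neg, Matrix.mul_smul, smul_smul, smul_neg, Matrix.mul_assoc]
  rw [sub_eq_add_neg, ← hrhs]
  simp only [Matrix.mul_neg]
  abel
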